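/- The energy per vertex of a k-regular graph Γ (k ≥ 1) is at least 1, with equality if and only if Γ is a disjoint union of copies of the complete bipartite graph K_{k,k}. -/

import Mathlib

set_option linter.unusedSectionVars false
open Finset

section Defs
variable {V : Type*} [Fintype V] [DecidableEq V]

theorem adjMatrix_isHermitian (G : SimpleGraph V) [DecidableRel G.Adj] :
    (SimpleGraph.adjMatrix ℝ G).IsHermitian := by
  ext i j
  simp [Matrix.conjTranspose_apply, SimpleGraph.adjMatrix_apply, SimpleGraph.adj_comm]

/-- The eigenvalues of the adjacency matrix of a graph. -/
noncomputable def adjEigs (G : SimpleGraph V) : V → ℝ := by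
  classical exact (adjMatrix_isHermitian G).eigenvalues

/-- The spectrum of the graph, as a multiset of real eigenvalues. -/
noncomputable def adjSpectrum (G : SimpleGraph V) : Multiset ℝ :=
  Finset.univ.val.map (adjEigs G)

/-- The energy per vertex of a graph. -/
noncomputable def epv (G : SimpleGraph V) : ℝ :=
  (∑ i, |adjEigs G i|) / (Fintype.card V)

/-- The disjoint union of an indexed family of graphs. -/
def sigmaGraph {ι : Type*} {W : ι → Type*} (G : ∀ i, SimpleGraph (W i)) :
    SimpleGraph (Σ i, W i) where
  Adj x y := ∃ (i : ι) (a b : W i), (G i).Adj a b ∧ x = ⟨i, a⟩ ∧ y = ⟨i, b⟩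
  symm := ⟨by rintro x y ⟨i, a, b, h, rfl, rfl⟩; exact ⟨i, b, a, h.symm, rfl, rfl⟩⟩
  loopless := ⟨by
    rintro x ⟨i, a, b, h, rfl, h2⟩
    simp only [Sigma.mk.inj_iff, heq_eq_eq, true_and] at h2
    exact h.ne h2⟩

/-- The bipartite incidence graph of a point-line geometry. -/
def incidenceGraph (P L : Type*) [Membership P L] : SimpleGraph (P ⊕ L) where
  Adj x y := (∃ p l, p ∈ l ∧ x = Sum.inl p ∧ y = Sum.inr l) ∨
             (∃ p l, p ∈ l ∧ x = Sum.inr l ∧ y = Sum.inl p)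
  symm := ⟨by
    rintro x y (⟨p, l, h, rfl, rfl⟩ | ⟨p, l, h, rfl, rfl⟩)
    · exact Or.inr ⟨p, l, h, rfl, rfl⟩
    · exact Or.inl ⟨p, l, h, rfl, rfl⟩⟩
  loopless := ⟨by rintro x (⟨p, l, h, rfl, h2⟩ | ⟨p, l, h, rfl, h2⟩) <;> simp at h2⟩

/-- The bipartite double of a graph. -/
def bipartiteDouble (G : SimpleGraph V) : SimpleGraph (V ⊕ V) where
  Adj x y := (∃ u v, G.Adj u v ∧ x = Sum.inl u ∧ y = Sum.inr v) ∨
             (∃ u v, G.Adj u v ∧ x = Sum.inr u ∧ y = Sum.inl v)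
  symm := ⟨by
    rintro x y (⟨u, v, h, rfl, rfl⟩ | ⟨u, v, h, rfl, rfl⟩)
    · exact Or.inr ⟨v, u, h.symm, rfl, rfl⟩
    · exact Or.inl ⟨v, u, h.symm, rfl, rfl⟩⟩
  loopless := ⟨by rintro x (⟨u, v, h, rfl, h2⟩ | ⟨u, v, h, rfl, h2⟩) <;> simp at h2⟩

end Defs
section Aux

open Matrix
variable {V : Type*} [Fintype V] [DecidableEq V]

theorem trace_sq_eq {V : Type*} [Fintype V] [DecidableEq V] (A : Matrix V V ℝ) (hA : A.IsHermitian) :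
    Matrix.trace (A * A) = ∑ i, hA.eigenvalues i ^ 2 := by
  set U := (Matrix.IsHermitian.eigenvectorUnitary hA : Matrix V V ℝ) with hUdef
  set D := (Matrix.diagonal (RCLike.ofReal ∘ hA.eigenvalues) : Matrix V V ℝ) with hD
  have hU : star U * U = 1 := (Matrix.mem_unitaryGroup_iff').mp (Matrix.IsHermitian.eigenvectorUnitary hA).2
  have hU' : ∀ X : Matrix V V ℝ, star U * (U * X) = X := fun X => by
    rw [← Matrix.mul_assoc, hU, Matrix.one_mul]
  have hAB : A = U * D * star U := hA.spectral_theorem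
  conv_lhs => rw [hAB]
  have e1 : U * D * star U * (U * D * star U) = U * (D * D) * star U := by
    simp only [Matrix.mul_assoc, hU']
  rw [e1, Matrix.trace_mul_cycle, ← Matrix.mul_assoc, hU, Matrix.one_mul, hD,
    Matrix.diagonal_mul_diagonal, Matrix.trace_diagonal]
  simp [sq]

theorem cube_eq (A : Matrix V V ℝ) (hA : A.IsHermitian) (r : ℝ)
    (h : ∀ i, hA.eigenvalues i ^ 3 = r * hA.eigenvalues i) :
    A * A * A = r • A := by
  set U := (Matrix.IsHermitian.eigenvectorUnitary hA : Matrix V V ℝ) with hUdef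
  set D := (Matrix.diagonal (RCLike.ofReal ∘ hA.eigenvalues) : Matrix V V ℝ) with hD
  have hU : star U * U = 1 := (Matrix.mem_unitaryGroup_iff').mp (Matrix.IsHermitian.eigenvectorUnitary hA).2
  have hU' : ∀ X : Matrix V V ℝ, star U * (U * X) = X := fun X => by
    rw [← Matrix.mul_assoc, hU, Matrix.one_mul]
  have hAB : A = U * D * star U := hA.spectral_theorem
  have hDDD : D * D * D = r • D := by
    rw [hD, Matrix.diagonal_mul_diagonal, Matrix.diagonal_mul_diagonal]
    ext i j
    rcases eq_or_ne i j with rfl | hij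
    · simp only [Matrix.diagonal_apply_eq, Matrix.smul_apply, Function.comp_apply,
        RCLike.ofReal_real_eq_id, id_eq, smul_eq_mul]
      linear_combination h i
    · simp [Matrix.diagonal_apply_ne _ hij]
  conv_lhs => rw [hAB]
  conv_rhs => rw [hAB]
  have e1 : U * D * star U * (U * D * star U) * (U * D * star U) = U * (D * D * D) * star U := by
    simp only [Matrix.mul_assoc, hU']
  rw [e1, hDDD, Matrix.mul_smul, Matrix.smul_mul]

theorem eig_cube (A : Matrix V V ℝ) (hA : A.IsHermitian) (r : ℝ)
    (h : A * A * A = r • A) (i : V) :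
    hA.eigenvalues i ^ 3 = r * hA.eigenvalues i := by
  have hv := hA.mulVec_eigenvectorBasis i
  set v := ⇑(hA.eigenvectorBasis i) with hvdef
  set μ := hA.eigenvalues i with hμ
  have h3 : (A * A * A) *ᵥ v = (μ ^ 3) • v := by
    rw [← Matrix.mulVec_mulVec, ← Matrix.mulVec_mulVec]
    simp only [hv, Matrix.mulVec_smul, smul_smul]
    congr 1
    ring
  rw [h] at h3
  have h4 : (r * μ) • v = (μ ^ 3) • v := by
    rw [← h3, Matrix.smul_mulVec, hv, smul_smul]
  have hvne : v ≠ 0 := by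
    have hne := (hA.eigenvectorBasis).orthonormal.ne_zero i
    intro hc
    apply hne
    ext j
    exact congrFun hc j
  by_contra hne
  apply hvne
  have h5 := sub_eq_zero.2 h4
  rw [← sub_smul] at h5
  have hc : r * μ - μ ^ 3 ≠ 0 := fun hc => hne (by linarith [sub_eq_zero.1 hc])
  ext j
  have h6 := congrFun h5 j
  simp only [Pi.smul_apply, smul_eq_mul, Pi.zero_apply] at h6
  rcases mul_eq_zero.1 h6 with h | h
  · exact absurd h hc
  · exact h

open Matrix Finset
variable {V : Type*} [Fintype V] [DecidableEq V] [Nonempty V]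

theorem eig_bound (G : SimpleGraph V) [DecidableRel G.Adj] (k : ℕ)
    (hreg : G.IsRegularOfDegree k) (hA : (SimpleGraph.adjMatrix ℝ G).IsHermitian) (i : V) :
    |hA.eigenvalues i| ≤ k := by
  have hv := hA.mulVec_eigenvectorBasis i
  set v := ⇑(hA.eigenvectorBasis i) with hvdef
  set μ := hA.eigenvalues i with hμ
  have hvne : v ≠ 0 := by
    have hne := (hA.eigenvectorBasis).orthonormal.ne_zero i
    intro hc; apply hne; ext j; exact congrFun hc j
  obtain ⟨m, -, hm⟩ := Finset.exists_max_image (Finset.univ : Finset V) (fun j => |v j|)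
    Finset.univ_nonempty
  have hmpos : 0 < |v m| := by
    obtain ⟨j, hj⟩ : ∃ j, v j ≠ 0 := by
      by_contra hc; push_neg at hc; exact hvne (funext hc)
    exact lt_of_lt_of_le (abs_pos.2 hj) (hm j (Finset.mem_univ j))
  have hAm : (SimpleGraph.adjMatrix ℝ G *ᵥ v) m = ∑ y ∈ G.neighborFinset m, v y :=
    SimpleGraph.adjMatrix_mulVec_apply _ _ _
  have key : |μ| * |v m| ≤ k * |v m| := by
    have h1 : |μ * v m| = |μ| * |v m| := abs_mul _ _
    have h2 : μ * v m = ∑ y ∈ G.neighborFinset m, v y := by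
      have := congrFun hv m
      simp only [Pi.smul_apply, smul_eq_mul] at this
      rw [← this, hAm]
    calc |μ| * |v m| = |∑ y ∈ G.neighborFinset m, v y| := by rw [← h1, h2]
      _ ≤ ∑ y ∈ G.neighborFinset m, |v y| := Finset.abs_sum_le_sum_abs _ _
      _ ≤ ∑ _y ∈ G.neighborFinset m, |v m| :=
          Finset.sum_le_sum fun y _ => hm y (Finset.mem_univ y)
      _ = k * |v m| := by rw [Finset.sum_const, nsmul_eq_mul, ← hreg m, SimpleGraph.degree]
  exact le_of_mul_le_mul_right key hmpos

open Matrix Finset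
variable {V : Type*} [Fintype V] [DecidableEq V]

theorem key_of_cube (G : SimpleGraph V) [DecidableRel G.Adj] (k : ℕ)
    (hreg : G.IsRegularOfDegree k)
    (h3 : SimpleGraph.adjMatrix ℝ G * SimpleGraph.adjMatrix ℝ G * SimpleGraph.adjMatrix ℝ G
      = ((k : ℝ) ^ 2) • SimpleGraph.adjMatrix ℝ G)
    {u v b : V} (huv : G.Adj u v) (hvb : G.Adj v b) :
    G.neighborFinset b = G.neighborFinset u := by
  set A := SimpleGraph.adjMatrix ℝ G with hAdef
  have hcard : ∀ x, (G.neighborFinset x).card = k := fun x => hreg x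
  have hle1 : ∀ x y, A x y ≤ 1 := by
    intro x y; rw [hAdef, SimpleGraph.adjMatrix_apply]; split <;> norm_num
  have A2le : ∀ x y, (A * A) x y ≤ (k : ℝ) := by
    intro x y
    rw [hAdef, SimpleGraph.mul_adjMatrix_apply]
    calc ∑ a ∈ G.neighborFinset y, A x a ≤ ∑ _a ∈ G.neighborFinset y, (1 : ℝ) :=
          Finset.sum_le_sum fun a _ => hle1 x a
      _ = k := by rw [Finset.sum_const, nsmul_eq_mul, hcard, mul_one]
  -- the (u,v) entry of A^3
  have hsum : ∑ b' ∈ G.neighborFinset v, (A * A) u b' = ∑ _b' ∈ G.neighborFinset v, (k : ℝ) := by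
    have e1 : (A * A * A) u v = ∑ b' ∈ G.neighborFinset v, (A * A) u b' := by
      rw [hAdef, SimpleGraph.mul_adjMatrix_apply]
    have e2 : (A * A * A) u v = (k : ℝ) ^ 2 := by
      rw [h3, Matrix.smul_apply, hAdef, SimpleGraph.adjMatrix_apply, if_pos huv, smul_eq_mul,
        mul_one]
    rw [← e1, e2, Finset.sum_const, nsmul_eq_mul, hcard, sq]
  have hAAk : (A * A) u b = (k : ℝ) :=
    (Finset.sum_eq_sum_iff_of_le fun b' _ => A2le u b').mp hsum b
      ((SimpleGraph.mem_neighborFinset _ _ _).2 hvb)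
  -- now N(b) ⊆ N(u)
  have hsub : G.neighborFinset b ⊆ G.neighborFinset u := by
    have e3 : ∑ a ∈ G.neighborFinset b, A u a = ∑ _a ∈ G.neighborFinset b, (1 : ℝ) := by
      rw [← SimpleGraph.mul_adjMatrix_apply, ← hAdef]
      rw [hAAk, Finset.sum_const, nsmul_eq_mul, hcard, mul_one]
    have := (Finset.sum_eq_sum_iff_of_le fun a _ => hle1 u a).mp e3
    intro a ha
    have h1 := this a ha
    rw [hAdef, SimpleGraph.adjMatrix_apply] at h1
    rw [SimpleGraph.mem_neighborFinset]
    by_contra hc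
    rw [if_neg hc] at h1
    norm_num at h1
  exact Finset.eq_of_subset_of_card_le hsub (by rw [hcard, hcard])

open Matrix

theorem cb_cube (k : ℕ) [inst : DecidableRel (completeBipartiteGraph (Fin k) (Fin k)).Adj] :
    SimpleGraph.adjMatrix ℝ (completeBipartiteGraph (Fin k) (Fin k)) *
      SimpleGraph.adjMatrix ℝ (completeBipartiteGraph (Fin k) (Fin k)) *
      SimpleGraph.adjMatrix ℝ (completeBipartiteGraph (Fin k) (Fin k)) =
    ((k : ℝ) ^ 2) • SimpleGraph.adjMatrix ℝ (completeBipartiteGraph (Fin k) (Fin k)) := by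
  set B := SimpleGraph.adjMatrix ℝ (completeBipartiteGraph (Fin k) (Fin k)) with hB
  have e1 : ∀ s s', (B * B) s s' =
      if (s.isLeft ∧ s'.isLeft) ∨ (s.isRight ∧ s'.isRight) then (k : ℝ) else 0 := by
    intro s s'
    rcases s with a | a <;> rcases s' with b | b <;>
      simp [hB, Matrix.mul_apply, Fintype.sum_sum_type, SimpleGraph.adjMatrix_apply]
  ext s s'
  rw [Matrix.mul_apply]
  rcases s with a | a <;> rcases s' with b | b <;> simp only [e1] <;>
    simp [hB, Fintype.sum_sum_type, SimpleGraph.adjMatrix_apply, sq]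

open Finset



section Struct
variable {V : Type*} [Fintype V] [DecidableEq V] [Nonempty V]

theorem structure_of_key (G : SimpleGraph V) [DecidableRel G.Adj] (k : ℕ) (hk : 1 ≤ k)
    (hreg : G.IsRegularOfDegree k)
    (key : ∀ {u v b : V}, G.Adj u v → G.Adj v b → G.neighborFinset b = G.neighborFinset u) :
    ∃ t : ℕ, Nonempty
      (G ≃g sigmaGraph (fun _ : Fin t => completeBipartiteGraph (Fin k) (Fin k))) := by
  classical
  have instFT : Fintype G.ConnectedComponent := Fintype.ofFinite _
  refine ⟨Fintype.card G.ConnectedComponent, ?_⟩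
  set t := Fintype.card G.ConnectedComponent with ht
  let eC : G.ConnectedComponent ≃ Fin t := Fintype.equivFin _
  let cmp : V → G.ConnectedComponent := fun x => G.connectedComponentMk x
  have hnb : ∀ x : V, ∃ y, G.Adj x y := by
    intro x
    have hpos : 0 < (G.neighborFinset x).card := by
      rw [show (G.neighborFinset x).card = G.degree x from rfl, hreg x]; omega
    obtain ⟨y, hy⟩ := Finset.card_pos.mp hpos
    exact ⟨y, (SimpleGraph.mem_neighborFinset _ _ _).1 hy⟩
  have hrep : ∀ c : G.ConnectedComponent, ∃ x, G.connectedComponentMk x = c := fun c =>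
    c.exists_rep
  let uu : G.ConnectedComponent → V := fun c => (hrep c).choose
  have hout : ∀ c, cmp (uu c) = c := fun c => (hrep c).choose_spec
  let vv : G.ConnectedComponent → V := fun c => (hnb (uu c)).choose
  have huv : ∀ c, G.Adj (uu c) (vv c) := fun c => (hnb (uu c)).choose_spec
  -- no edges between common neighbors
  have hnoedge : ∀ {a x y : V}, G.Adj a x → G.Adj a y → ¬ G.Adj x y := by
    intro a x y hax hay hxy
    have h1 := key hax hxy
    have : a ∈ G.neighborFinset y := (SimpleGraph.mem_neighborFinset _ _ _).2 hay.symm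
    rw [h1] at this
    exact G.irrefl ((SimpleGraph.mem_neighborFinset _ _ _).1 this)
  -- sides
  let L : G.ConnectedComponent → Finset V := fun c => G.neighborFinset (vv c)
  let R : G.ConnectedComponent → Finset V := fun c => G.neighborFinset (uu c)
  have hLadj : ∀ c x, x ∈ L c ↔ G.Adj (vv c) x := fun c x => SimpleGraph.mem_neighborFinset _ _ _
  have hRadj : ∀ c x, x ∈ R c ↔ G.Adj (uu c) x := fun c x => SimpleGraph.mem_neighborFinset _ _ _
  have huL : ∀ c, uu c ∈ L c := fun c => (hLadj c _).2 (huv c).symm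
  have hvR : ∀ c, vv c ∈ R c := fun c => (hRadj c _).2 (huv c)
  have hLR : ∀ c x, x ∈ L c → x ∈ R c → False := by
    intro c x hxL hxR
    exact hnoedge ((hRadj c x).1 hxR) (huv c) (((hLadj c x).1 hxL).symm)
  -- step/closure
  have hstep : ∀ c {x y : V}, x ∈ L c ∪ R c → G.Adj x y → y ∈ L c ∪ R c := by
    intro c x y hx hxy
    rcases Finset.mem_union.1 hx with hx | hx
    · have h1 := key ((hLadj c x).1 hx) hxy
      have h2 : uu c ∈ G.neighborFinset (vv c) := (huL c)
      rw [← h1] at h2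
      exact Finset.mem_union_right _ ((hRadj c y).2 ((SimpleGraph.mem_neighborFinset _ _ _).1 h2).symm)
    · have h1 := key ((hRadj c x).1 hx) hxy
      have h2 : vv c ∈ G.neighborFinset (uu c) := (hvR c)
      rw [← h1] at h2
      exact Finset.mem_union_left _ ((hLadj c y).2 ((SimpleGraph.mem_neighborFinset _ _ _).1 h2).symm)
  have hwalk : ∀ c {a b : V} (_ : G.Walk a b), a ∈ L c ∪ R c → b ∈ L c ∪ R c := by
    intro c a b p
    induction p with
    | nil => exact id
    | cons h p ih => intro ha; exact ih (hstep c ha h)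
  have hcomp1 : ∀ c x, cmp x = c → x ∈ L c ∪ R c := by
    intro c x hcx
    have hreach : G.Reachable (uu c) x := by
      have : cmp (uu c) = cmp x := by rw [hout c, hcx]
      exact (SimpleGraph.ConnectedComponent.eq.1 this)
    obtain ⟨p⟩ := hreach
    exact hwalk c p (Finset.mem_union_left _ (huL c))
  have hcomp2 : ∀ c x, x ∈ L c ∪ R c → cmp x = c := by
    intro c x hx
    have hr : G.Reachable (uu c) x := by
      rcases Finset.mem_union.1 hx with hx | hx
      · exact (SimpleGraph.Adj.reachable (huv c)).trans
          (SimpleGraph.Adj.reachable ((hLadj c x).1 hx))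
      · exact SimpleGraph.Adj.reachable ((hRadj c x).1 hx)
    rw [← hout c]
    exact (SimpleGraph.ConnectedComponent.eq.2 hr.symm)
  -- side equivs
  have cardL : ∀ c, Fintype.card {x // x ∈ L c} = k := by
    intro c; rw [Fintype.card_coe]; exact hreg (vv c)
  have cardR : ∀ c, Fintype.card {x // x ∈ R c} = k := by
    intro c; rw [Fintype.card_coe]; exact hreg (uu c)
  let α : ∀ c, {x // x ∈ L c} ≃ Fin k := fun c =>
    Fintype.equivFinOfCardEq (by rw [cardL c])
  let β : ∀ c, {x // x ∈ R c} ≃ Fin k := fun c =>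
    Fintype.equivFinOfCardEq (by rw [cardR c])
  let sd : G.ConnectedComponent → V → Fin k ⊕ Fin k := fun c x =>
    if h : x ∈ L c then Sum.inl (α c ⟨x, h⟩)
    else if h' : x ∈ R c then Sum.inr (β c ⟨x, h'⟩)
    else Sum.inl ⟨0, hk⟩
  have hsdL : ∀ c x (h : x ∈ L c), sd c x = Sum.inl (α c ⟨x, h⟩) := by
    intro c x h; simp only [sd, dif_pos h]
  have hsdR : ∀ c x (h : x ∈ R c), sd c x = Sum.inr (β c ⟨x, h⟩) := by
    intro c x h
    have hnL : ¬ x ∈ L c := fun hL => hLR c x hL h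
    simp only [sd, dif_neg hnL, dif_pos h]
  let f : V → Σ _ : Fin t, Fin k ⊕ Fin k := fun x => ⟨eC (cmp x), sd (cmp x) x⟩
  have hinj : Function.Injective f := by
    intro x y hxy
    have hc : cmp x = cmp y := eC.injective (congrArg Sigma.fst hxy)
    have hs : sd (cmp x) x = sd (cmp y) y := congrArg Sigma.snd hxy
    rw [← hc] at hs
    set c := cmp x with hcc
    rcases Finset.mem_union.1 (hcomp1 c x rfl) with hx | hx <;>
      rcases Finset.mem_union.1 (hcomp1 c y hc.symm) with hy | hy
    · rw [hsdL c x hx, hsdL c y hy] at hs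
      have := (α c).injective (Sum.inl.inj hs)
      exact congrArg Subtype.val this
    · rw [hsdL c x hx, hsdR c y hy] at hs; exact absurd hs (by simp)
    · rw [hsdR c x hx, hsdL c y hy] at hs; exact absurd hs (by simp)
    · rw [hsdR c x hx, hsdR c y hy] at hs
      have := (β c).injective (Sum.inr.inj hs)
      exact congrArg Subtype.val this
  have hsurj : Function.Surjective f := by
    rintro ⟨i, a | b⟩
    · set c := eC.symm i with hci
      refine ⟨((α c).symm a).1, ?_⟩
      have hx : ((α c).symm a).1 ∈ L c := ((α c).symm a).2
      have hcx : cmp ((α c).symm a).1 = c := hcomp2 c _ (Finset.mem_union_left _ hx)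
      show (⟨eC (cmp _), sd (cmp _) _⟩ : Σ _ : Fin t, Fin k ⊕ Fin k) = ⟨i, Sum.inl a⟩
      rw [hcx, hsdL c _ hx]
      have h1 : (⟨((α c).symm a).1, hx⟩ : {x // x ∈ L c}) = (α c).symm a := Subtype.ext rfl
      rw [h1, Equiv.apply_symm_apply, hci, Equiv.apply_symm_apply]
    · set c := eC.symm i with hci
      refine ⟨((β c).symm b).1, ?_⟩
      have hx : ((β c).symm b).1 ∈ R c := ((β c).symm b).2
      have hcx : cmp ((β c).symm b).1 = c := hcomp2 c _ (Finset.mem_union_right _ hx)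
      show (⟨eC (cmp _), sd (cmp _) _⟩ : Σ _ : Fin t, Fin k ⊕ Fin k) = ⟨i, Sum.inr b⟩
      rw [hcx, hsdR c _ hx]
      have h1 : (⟨((β c).symm b).1, hx⟩ : {x // x ∈ R c}) = (β c).symm b := Subtype.ext rfl
      rw [h1, Equiv.apply_symm_apply, hci, Equiv.apply_symm_apply]
  refine ⟨⟨Equiv.ofBijective f ⟨hinj, hsurj⟩, ?_⟩⟩
  intro x y
  show (sigmaGraph _).Adj (f x) (f y) ↔ G.Adj x y
  constructor
  · rintro ⟨i, a, b, hab, h1, h2⟩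
    have hc : cmp x = cmp y := by
      have e1 : eC (cmp x) = i := congrArg Sigma.fst h1
      have e2 : eC (cmp y) = i := congrArg Sigma.fst h2
      exact eC.injective (e1.trans e2.symm)
    set c := cmp x with hcc
    have hsx : sd c x = a := congrArg Sigma.snd h1
    have hsy : sd c y = b := by
      rw [hc]; exact congrArg Sigma.snd h2
    rcases Finset.mem_union.1 (hcomp1 c x rfl) with hx | hx <;>
      rcases Finset.mem_union.1 (hcomp1 c y hc.symm) with hy | hy
    · rw [hsdL c x hx] at hsx; rw [hsdL c y hy] at hsy
      rw [← hsx, ← hsy] at hab; simp at hab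
    · -- x ∈ L, y ∈ R : adjacent
      have h1 := key (huv c) ((hLadj c x).1 hx)
      have : y ∈ G.neighborFinset x := by
        rw [h1]; exact hy
      exact (SimpleGraph.mem_neighborFinset _ _ _).1 this
    · have h1 := key (huv c).symm ((hRadj c x).1 hx)
      have : y ∈ G.neighborFinset x := by
        rw [h1]; exact hy
      exact (SimpleGraph.mem_neighborFinset _ _ _).1 this
    · rw [hsdR c x hx] at hsx; rw [hsdR c y hy] at hsy
      rw [← hsx, ← hsy] at hab; simp at hab
  · intro hxy
    have hc : cmp x = cmp y := SimpleGraph.ConnectedComponent.sound hxy.reachable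
    set c := cmp x with hcc
    have hfy : f y = ⟨eC c, sd c y⟩ := by
      show (⟨eC (cmp y), sd (cmp y) y⟩ : Σ _ : Fin t, Fin k ⊕ Fin k) = _
      rw [← hc]
    rcases Finset.mem_union.1 (hcomp1 c x rfl) with hx | hx <;>
      rcases Finset.mem_union.1 (hcomp1 c y hc.symm) with hy | hy
    · exact absurd hxy (hnoedge ((hLadj c x).1 hx) ((hLadj c y).1 hy))
    · exact ⟨eC c, sd c x, sd c y, by
        rw [hsdL c x hx, hsdR c y hy]; simp, rfl, hfy⟩
    · exact ⟨eC c, sd c x, sd c y, by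
        rw [hsdR c x hx, hsdL c y hy]; simp, rfl, hfy⟩
    · exact absurd hxy (hnoedge ((hRadj c x).1 hx) ((hRadj c y).1 hy))
end Struct

section Hcube
theorem sigma_adj_iff {t k : ℕ} (i j : Fin t) (s s' : Fin k ⊕ Fin k) :
    (sigmaGraph (fun _ : Fin t => completeBipartiteGraph (Fin k) (Fin k))).Adj ⟨i, s⟩ ⟨j, s'⟩ ↔
      i = j ∧ (completeBipartiteGraph (Fin k) (Fin k)).Adj s s' := by
  constructor
  · rintro ⟨i', a, b, hab, h1, h2⟩
    obtain ⟨rfl, rfl⟩ : i = i' ∧ s = a := by simpa [Sigma.mk.inj_iff] using h1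
    obtain ⟨h2a, rfl⟩ : j = i ∧ s' = b := by simpa [Sigma.mk.inj_iff] using h2
    subst h2a
    exact ⟨rfl, hab⟩
  · rintro ⟨rfl, h⟩
    exact ⟨i, s, s', h, rfl, rfl⟩

theorem H_cube (t k : ℕ)
    [inst : DecidableRel (sigmaGraph (fun _ : Fin t => completeBipartiteGraph (Fin k) (Fin k))).Adj] :
    SimpleGraph.adjMatrix ℝ (sigmaGraph (fun _ : Fin t => completeBipartiteGraph (Fin k) (Fin k))) *
    SimpleGraph.adjMatrix ℝ (sigmaGraph (fun _ : Fin t => completeBipartiteGraph (Fin k) (Fin k))) *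
    SimpleGraph.adjMatrix ℝ (sigmaGraph (fun _ : Fin t => completeBipartiteGraph (Fin k) (Fin k))) =
    ((k : ℝ) ^ 2) • SimpleGraph.adjMatrix ℝ
      (sigmaGraph (fun _ : Fin t => completeBipartiteGraph (Fin k) (Fin k))) := by
  classical
  have hH : SimpleGraph.adjMatrix ℝ (sigmaGraph (fun _ : Fin t => completeBipartiteGraph (Fin k) (Fin k)))
      = Matrix.blockDiagonal'
        (fun _ : Fin t => SimpleGraph.adjMatrix ℝ (completeBipartiteGraph (Fin k) (Fin k))) := by
    ext ⟨i, a⟩ ⟨j, b⟩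
    rcases eq_or_ne i j with rfl | hij
    · rw [Matrix.blockDiagonal'_apply_eq]
      simp [SimpleGraph.adjMatrix_apply, sigma_adj_iff]
    · rw [Matrix.blockDiagonal'_apply_ne _ _ _ hij]
      simp [SimpleGraph.adjMatrix_apply, sigma_adj_iff, hij]
  rw [hH, ← Matrix.blockDiagonal'_mul, ← Matrix.blockDiagonal'_mul, ← Matrix.blockDiagonal'_smul]
  exact congrArg Matrix.blockDiagonal' (funext fun _ => by rw [Pi.smul_apply]; exact cb_cube k)
end Hcube


theorem adjMatrix_congr_inst (G : SimpleGraph V) (h1 h2 : DecidableRel G.Adj) :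
    (haveI := h1; SimpleGraph.adjMatrix ℝ G) = (haveI := h2; SimpleGraph.adjMatrix ℝ G) := by
  have : h1 = h2 := Subsingleton.elim _ _
  rw [this]

theorem eig_congr {A B : Matrix V V ℝ} (hA : A.IsHermitian) (hB : B.IsHermitian)
    (h : A = B) : hA.eigenvalues = hB.eigenvalues := by subst h; rfl


end Aux

/-- the energy per vertex of a k-regular graph is at least 1, with
equality iff the graph is a disjoint union of copies of K_{k,k}. -/
theorem one_le_epv_of_regular {V : Type*} [Fintype V] [DecidableEq V] [Nonempty V]
    (G : SimpleGraph V) [DecidableRel G.Adj] (k : ℕ) (hk : 1 ≤ k)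
    (hreg : G.IsRegularOfDegree k) :
    1 ≤ epv G ∧
    (epv G = 1 ↔ ∃ t : ℕ, Nonempty
      (G ≃g sigmaGraph (fun _ : Fin t => completeBipartiteGraph (Fin k) (Fin k)))) := by
  classical
  set A := SimpleGraph.adjMatrix ℝ G with hA'
  have hA : A.IsHermitian := adjMatrix_isHermitian G
  have hEig : adjEigs G = hA.eigenvalues := eig_congr _ _ (adjMatrix_congr_inst G _ _)
  set n := Fintype.card V with hn'
  have hn : 0 < n := Fintype.card_pos
  have hnR : (0:ℝ) < n := by exact_mod_cast hn
  have hkR : (0:ℝ) < k := by exact_mod_cast hk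
  have hsum2 : ∑ i, hA.eigenvalues i ^ 2 = (n : ℝ) * k := by
    rw [← trace_sq_eq A hA]
    have hdiag : ∀ i, (A * A) i i = (G.degree i : ℝ) := fun i =>
      SimpleGraph.adjMatrix_mul_self_apply_self G i
    rw [Matrix.trace]
    simp only [Matrix.diag_apply, hdiag]
    have hdeg : ∀ x : V, ((G.degree x : ℕ) : ℝ) = (k : ℝ) := fun x => by rw [hreg x]
    rw [Finset.sum_congr rfl fun x _ => hdeg x, Finset.sum_const, nsmul_eq_mul,
      Finset.card_univ, ← hn']
  have habs : ∀ i, |hA.eigenvalues i| ≤ (k:ℝ) := eig_bound G k hreg hA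
  have hge : (n : ℝ) ≤ ∑ i, |hA.eigenvalues i| := by
    have h1 : ∀ i ∈ Finset.univ, hA.eigenvalues i ^ 2 ≤ (k:ℝ) * |hA.eigenvalues i| := by
      intro i _
      have h2 : hA.eigenvalues i ^ 2 = |hA.eigenvalues i| * |hA.eigenvalues i| := by
        rw [← sq_abs]; ring
      rw [h2]
      exact mul_le_mul_of_nonneg_right (habs i) (abs_nonneg _)
    have h2 : (n:ℝ) * k ≤ (k:ℝ) * ∑ i, |hA.eigenvalues i| := by
      rw [← hsum2, Finset.mul_sum]
      exact Finset.sum_le_sum h1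
    nlinarith
  have hepv : epv G = (∑ i, |hA.eigenvalues i|) / (n:ℝ) := by
    unfold epv
    rw [hEig, ← hn']
  have part1 : 1 ≤ epv G := by
    rw [hepv, le_div_iff₀ hnR, one_mul]
    exact hge
  refine ⟨part1, ?_, ?_⟩
  · intro h1
    have hsumabs : ∑ i, |hA.eigenvalues i| = (n:ℝ) := by
      rw [hepv, div_eq_one_iff_eq (ne_of_gt hnR)] at h1
      exact h1
    have hzero : ∀ i, (k:ℝ) * |hA.eigenvalues i| - hA.eigenvalues i ^ 2 = 0 := by
      have hs : ∑ i, ((k:ℝ) * |hA.eigenvalues i| - hA.eigenvalues i ^ 2) = 0 := by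
        rw [Finset.sum_sub_distrib, ← Finset.mul_sum, hsumabs, hsum2]; ring
      intro i
      refine (Finset.sum_eq_zero_iff_of_nonneg ?_).1 hs i (Finset.mem_univ i)
      intro j _
      have h2 : hA.eigenvalues j ^ 2 = |hA.eigenvalues j| * |hA.eigenvalues j| := by
        rw [← sq_abs]; ring
      rw [h2]
      nlinarith [habs j, abs_nonneg (hA.eigenvalues j)]
    have hcube' : ∀ i, hA.eigenvalues i ^ 3 = (k:ℝ)^2 * hA.eigenvalues i := by
      intro i
      set μ := hA.eigenvalues i with hμ
      have h2 : (k:ℝ) * |μ| = μ ^ 2 := by linarith [hzero i]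
      have h4 : μ^2 * (μ^2 - (k:ℝ)^2) = 0 := by nlinarith [abs_mul_abs_self μ]
      rcases mul_eq_zero.1 h4 with h | h
      · have : μ = 0 := by nlinarith
        rw [this]; ring
      · have : μ^2 = (k:ℝ)^2 := by linarith
        calc μ^3 = μ^2 * μ := by ring
          _ = (k:ℝ)^2 * μ := by rw [this]
    have h3 : A * A * A = ((k:ℝ)^2) • A := cube_eq A hA _ hcube'
    exact structure_of_key G k hk hreg (fun {u v b} huv hvb => key_of_cube G k hreg h3 huv hvb)
  · rintro ⟨t, ⟨e⟩⟩
    letI instH : DecidableRel (sigmaGraph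
        (fun _ : Fin t => completeBipartiteGraph (Fin k) (Fin k))).Adj := Classical.decRel _
    set Hm := SimpleGraph.adjMatrix ℝ
      (sigmaGraph (fun _ : Fin t => completeBipartiteGraph (Fin k) (Fin k))) with hHm
    have hsub : A = Hm.submatrix e.toEquiv e.toEquiv := by
      ext x y
      rw [Matrix.submatrix_apply]
      simp only [hA', hHm, SimpleGraph.adjMatrix_apply]
      have hxy : (sigmaGraph (fun _ : Fin t => completeBipartiteGraph (Fin k) (Fin k))).Adj
          (e.toEquiv x) (e.toEquiv y) ↔ G.Adj x y := e.map_adj_iff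
      by_cases h : G.Adj x y
      · rw [if_pos h, if_pos (hxy.mpr h)]
      · rw [if_neg h, if_neg (fun hc => h (hxy.mp hc))]
    have h3 : A * A * A = ((k:ℝ)^2) • A := by
      rw [hsub, Matrix.submatrix_mul_equiv, Matrix.submatrix_mul_equiv, H_cube t k,
        Matrix.submatrix_smul]
      rfl
    have hc := fun i => eig_cube A hA ((k:ℝ)^2) h3 i
    have habseq : ∀ i, (k:ℝ) * |hA.eigenvalues i| = hA.eigenvalues i ^ 2 := by
      intro i
      set μ := hA.eigenvalues i with hμ
      have h5 : μ * ((μ - k) * (μ + k)) = 0 := by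
        have := hc i; nlinarith
      rcases mul_eq_zero.1 h5 with h | h
      · rw [h]; simp
      · rcases mul_eq_zero.1 h with h | h
        · have : μ = k := by linarith
          rw [this, abs_of_pos hkR]; ring
        · have : μ = -k := by linarith
          rw [this, abs_neg, abs_of_pos hkR]; ring
    have hsumabs : ∑ i, |hA.eigenvalues i| = (n:ℝ) := by
      have h6 : (k:ℝ) * ∑ i, |hA.eigenvalues i| = (n:ℝ) * k := by
        rw [Finset.mul_sum, ← hsum2]
        exact Finset.sum_congr rfl fun i _ => habseq i
      field_simp at h6
      nlinarith
    rw [hepv, hsumabs, div_self (ne_of_gt hnR)]
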